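/- Let f : ℝ → ℝ be continuous with sign condition f(s)s ≥ 0 and satisfy 0 ≤ F(s) ≤ f(s)s for all s, where F is the antiderivative of f vanishing at 0. Let f_k be the truncation of f at level k and F_k its antiderivative vanishing at 0. Then 0 ≤ F_k(s) ≤ f_k(s)·s + f(k)k + |f(-k)|k for all s ∈ ℝ; moreover for |s| ≤ k one has exactly 0 ≤ F_k(s) ≤ f_k(s)·s. -/
import Mathlib


noncomputable def trunc (f : ℝ → ℝ) (k : ℝ) (s : ℝ) : ℝ :=
  if |s| ≤ k then f s else if k < s then f k else f (-k)

noncomputable def truncF (f : ℝ → ℝ) (k : ℝ) (l : ℝ) : ℝ :=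
  ∫ s in (0:ℝ)..l, trunc f k s

lemma trunc_eq_comp (f : ℝ → ℝ) (k : ℝ) (hk : 0 ≤ k) (s : ℝ) :
    trunc f k s = f (max (-k) (min s k)) := by
  unfold trunc
  rcases le_or_gt s k with h1 | h1
  · rcases le_or_gt (-k) s with h2 | h2
    · rw [if_pos (abs_le.mpr ⟨h2, h1⟩), min_eq_left h1, max_eq_right h2]
    · have hn : ¬ |s| ≤ k := fun h => absurd (abs_le.mp h).1 (not_le.mpr h2)
      rw [if_neg hn, if_neg (by linarith), min_eq_left h1, max_eq_left h2.le]
  · have hn : ¬ |s| ≤ k := fun h => absurd (abs_le.mp h).2 (not_le.mpr h1)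
    rw [if_neg hn, if_pos h1, min_eq_right h1.le, max_eq_right (by linarith)]

lemma trunc_continuous (f : ℝ → ℝ) (hf : Continuous f) (k : ℝ) (hk : 0 ≤ k) :
    Continuous (trunc f k) := by
  have : trunc f k = fun s => f (max (-k) (min s k)) :=
    funext (trunc_eq_comp f k hk)
  rw [this]
  exact hf.comp (continuous_const.max (continuous_id.min continuous_const))

lemma truncF_eq_of_abs_le (f : ℝ → ℝ) (k : ℝ) (s : ℝ) (hs : |s| ≤ k) :
    truncF f k s = ∫ t in (0:ℝ)..s, f t := by
  apply intervalIntegral.integral_congr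
  intro t ht
  rw [Set.mem_uIcc] at ht
  have habs : |t| ≤ k := by
    rcases abs_le.mp hs with ⟨h1, h2⟩
    rcases ht with ⟨ha, hb⟩ | ⟨ha, hb⟩ <;> exact abs_le.mpr ⟨by linarith, by linarith⟩
  simp [trunc, habs]

theorem stmt_18 (f : ℝ → ℝ) (hf : Continuous f)
    (hsign : ∀ s : ℝ, 0 ≤ f s * s)
    (hF : ∀ s : ℝ, 0 ≤ ∫ t in (0:ℝ)..s, f t ∧ (∫ t in (0:ℝ)..s, f t) ≤ f s * s)
    (k : ℕ) (hk : 1 ≤ k) :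
    (∀ s : ℝ, 0 ≤ truncF f k s ∧
      truncF f k s ≤ trunc f k s * s + f k * k + |f (-(k : ℝ))| * k) ∧
    (∀ s : ℝ, |s| ≤ k → truncF f k s ≤ trunc f k s * s) := by
  set K : ℝ := (k : ℝ) with hKdef
  have hK1 : (1:ℝ) ≤ K := by simp only [hKdef]; exact_mod_cast hk
  have hK0 : (0:ℝ) < K := by linarith
  have htc : Continuous (trunc f K) := trunc_continuous f hf K hK0.le
  -- key facts at ±K
  have hfK : 0 ≤ f K := by nlinarith [hsign K]
  have hfmK : f (-K) ≤ 0 := by nlinarith [hsign (-K)]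
  have habsmK : |f (-K)| = -f (-K) := abs_of_nonpos hfmK
  obtain ⟨hFK0, hFK1⟩ := hF K
  obtain ⟨hFmK0, hFmK1⟩ := hF (-K)
  -- the inner-region claim
  have inner : ∀ s : ℝ, |s| ≤ K → 0 ≤ truncF f K s ∧ truncF f K s ≤ trunc f K s * s := by
    intro s hs
    have heq := truncF_eq_of_abs_le f K s hs
    have htr : trunc f K s = f s := by simp [trunc, hs]
    rw [heq, htr]
    exact hF s
  constructor
  · intro s
    rcases le_or_gt (|s|) K with hs | hs
    · obtain ⟨h0, h1⟩ := inner s hs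
      refine ⟨h0, h1.trans ?_⟩
      have : 0 ≤ |f (-K)| * K := mul_nonneg (abs_nonneg _) hK0.le
      nlinarith [mul_nonneg hfK hK0.le]
    · rcases lt_or_ge K s with hs1 | hs1
      · -- s > K
        have hsplit : truncF f K s =
            (∫ t in (0:ℝ)..K, trunc f K t) + ∫ t in K..s, trunc f K t :=
          (intervalIntegral.integral_add_adjacent_intervals
            (htc.intervalIntegrable _ _) (htc.intervalIntegrable _ _)).symm
        have h1 : (∫ t in (0:ℝ)..K, trunc f K t) = ∫ t in (0:ℝ)..K, f t :=
          truncF_eq_of_abs_le f K K (by rw [abs_of_nonneg hK0.le])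
        have h2 : (∫ t in K..s, trunc f K t) = (s - K) * f K := by
          rw [intervalIntegral.integral_congr (g := fun _ => f K) ?_]
          · simp [smul_eq_mul]
          · intro t ht
            rw [Set.uIcc_of_le hs1.le] at ht
            rw [trunc_eq_comp f K hK0.le, min_eq_right ht.1,
              max_eq_right (by linarith)]
        have htr : trunc f K s = f K := by
          rw [trunc_eq_comp f K hK0.le, min_eq_right hs1.le,
            max_eq_right (by linarith)]
        rw [hsplit, h1, h2, htr]
        constructor
        · have : 0 ≤ (s - K) * f K := mul_nonneg (by linarith) hfK
          linarith
        · have : 0 ≤ |f (-K)| * K := mul_nonneg (abs_nonneg _) hK0.le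
          nlinarith
      · -- s < -K
        have hs2 : s < -K := by
          rcases abs_cases s with ⟨h, _⟩ | ⟨h, _⟩ <;> [linarith; linarith]
        have hsplit : truncF f K s =
            (∫ t in (0:ℝ)..(-K), trunc f K t) + ∫ t in (-K)..s, trunc f K t :=
          (intervalIntegral.integral_add_adjacent_intervals
            (htc.intervalIntegrable _ _) (htc.intervalIntegrable _ _)).symm
        have h1 : (∫ t in (0:ℝ)..(-K), trunc f K t) = ∫ t in (0:ℝ)..(-K), f t :=
          truncF_eq_of_abs_le f K (-K) (by rw [abs_neg, abs_of_nonneg hK0.le])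
        have h2 : (∫ t in (-K)..s, trunc f K t) = (s - (-K)) * f (-K) := by
          rw [intervalIntegral.integral_congr (g := fun _ => f (-K)) ?_]
          · simp [smul_eq_mul]
          · intro t ht
            rw [Set.uIcc_of_ge hs2.le] at ht
            rw [trunc_eq_comp f K hK0.le, min_eq_left (by linarith [ht.2]),
              max_eq_left ht.2]
        have htr : trunc f K s = f (-K) := by
          rw [trunc_eq_comp f K hK0.le, min_eq_left (by linarith),
            max_eq_left (by linarith)]
        rw [hsplit, h1, h2, htr]
        constructor
        · nlinarith [mul_nonneg (neg_nonneg.mpr hfmK) (show (0:ℝ) ≤ -(s - (-K)) by linarith)]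
        · nlinarith [mul_nonneg hfK hK0.le]
  · intro s hs
    exact (inner s hs).2
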